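/- Under the setting of the previous theorem (bifurcation necessity), let (u_k) be nonzero solutions of L'(u_k) = λ_k G'(u_k) with u_k → θ, λ_k → λ*, and set v_k = u_k/‖u_k‖. If v_k ⇀ v* weakly, then for any h ∈ H, (1/‖u_k‖)(∇L(u_k), h) → (v*, B(θ)h) and (λ_k/‖u_k‖)(∇G(u_k), h) → λ* (G''(θ)v*, h), so that B(θ)v* = λ* G''(θ)v*; moreover C₀' ≤ ((λ* G''(θ) - Q(θ)) v*, v*) and hence v* ≠ θ. -/

import Mathlib

open scoped RealInnerProductSpace
open Filter Topology


private lemma mvt_aux {H : Type*} [NormedAddCommGroup H] [InnerProductSpace ℝ H]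
    (V : Set H) (g : H → H) (T : H → H →L[ℝ] H)
    (hgc : ContinuousOn g V)
    (hgat : ∀ u ∈ V, ∀ v : H,
      Tendsto (fun t : ℝ => t⁻¹ • (g (u + t • v) - g u)) (𝓝[≠] (0:ℝ)) (𝓝 (T u v)))
    (hg0 : g 0 = 0)
    (u h : H) (hseg : ∀ t : ℝ, t ∈ Set.Icc (0:ℝ) 1 → t • u ∈ V) :
    ∃ τ : ℝ, τ ∈ Set.Ioo (0:ℝ) 1 ∧ ⟪g u, h⟫ = ⟪T (τ • u) u, h⟫ := by
  set f : ℝ → ℝ := fun t => ⟪g (t • u), h⟫ with hf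
  have hcont : ContinuousOn f (Set.Icc 0 1) := by
    apply ContinuousOn.inner ?_ continuousOn_const
    exact hgc.comp ((continuous_id.smul continuous_const).continuousOn) hseg
  have hderiv : ∀ t ∈ Set.Ioo (0:ℝ) 1, HasDerivAt f (⟪T (t • u) u, h⟫) t := by
    intro t ht
    have htV : t • u ∈ V := hseg t ⟨ht.1.le, ht.2.le⟩
    have hlim2 : Tendsto (fun s : ℝ => ⟪(s⁻¹ • (g (t • u + s • u) - g (t • u)) : H), h⟫)
        (𝓝[≠] (0:ℝ)) (𝓝 ⟪T (t • u) u, h⟫) :=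
      (hgat (t • u) htV u).inner tendsto_const_nhds
    rw [hasDerivAt_iff_tendsto_slope]
    have hmap : Filter.map (fun s : ℝ => t + s) (𝓝[≠] (0:ℝ)) = 𝓝[≠] t := by
      simpa using (Homeomorph.addLeft t).map_punctured_nhds_eq 0
    rw [← hmap, tendsto_map'_iff]
    apply hlim2.congr'
    filter_upwards [self_mem_nhdsWithin] with s hs
    have hs0 : (s : ℝ) ≠ 0 := hs
    have : (t + s) • u = t • u + s • u := add_smul t s u
    simp only [Function.comp_apply, slope_def_field, hf, this]
    rw [real_inner_smul_left, inner_sub_left]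
    field_simp
    rw [add_sub_cancel_left, mul_div_cancel_left₀ _ hs0]
  obtain ⟨c, hc, hceq⟩ :=
    exists_hasDerivAt_eq_slope f (fun t => ⟪T (t • u) u, h⟫) one_pos hcont hderiv
  refine ⟨c, hc, ?_⟩
  rw [hceq]
  simp [hf, hg0]

private lemma cpt_aux {H : Type*} [NormedAddCommGroup H] [InnerProductSpace ℝ H] [CompleteSpace H]
    (T : H →L[ℝ] H) (hT : IsCompactOperator T) (v : ℕ → H) (hb : ∀ k, ‖v k‖ ≤ 1)
    (vstar : H) (hweak : ∀ w : H, Tendsto (fun k => ⟪v k, w⟫) atTop (𝓝 ⟪vstar, w⟫)) :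
    Tendsto (fun k => T (v k)) atTop (𝓝 (T vstar)) := by
  have hwk : ∀ w : H, Tendsto (fun k => ⟪T (v k), w⟫) atTop (𝓝 ⟪T vstar, w⟫) := by
    intro w
    have := hweak (ContinuousLinearMap.adjoint T w)
    simpa only [ContinuousLinearMap.adjoint_inner_right] using this
  have hKc : IsCompact (closure ((T : H →ₗ[ℝ] H) '' Metric.closedBall 0 1)) :=
    IsCompactOperator.isCompact_closure_image_closedBall (f := (T : H →ₗ[ℝ] H)) hT 1
  have hmem : ∀ k, T (v k) ∈ closure ((T : H →ₗ[ℝ] H) '' Metric.closedBall 0 1) := fun k =>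
    subset_closure ⟨v k, by simpa [Metric.mem_closedBall, dist_zero_right] using hb k, rfl⟩
  apply tendsto_of_subseq_tendsto
  intro ns hns
  obtain ⟨x, hxS, φ, hφ, hconv⟩ := hKc.tendsto_subseq (fun n => hmem (ns n))
  refine ⟨φ, ?_⟩
  have hx : x = T vstar := by
    apply ext_inner_right ℝ
    intro w
    have h1 : Tendsto (fun n => ⟪T (v (ns (φ n))), w⟫) atTop (𝓝 ⟪x, w⟫) :=
      Tendsto.inner hconv tendsto_const_nhds
    have h2 : Tendsto (fun n => ⟪T (v (ns (φ n))), w⟫) atTop (𝓝 ⟪T vstar, w⟫) := by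
      have := (hwk w).comp (hns.comp hφ.tendsto_atTop)
      exact this
    exact tendsto_nhds_unique h1 h2
  rw [hx] at hconv
  exact hconv
/-- (Refinement of the bifurcation-necessity theorem.)  In the setting of the bifurcation
necessity theorem, let `(u_k)` be nonzero solutions of `L'(u_k) = λ_k G'(u_k)` with
`u_k → θ`, `λ_k → λ*`, and `v_k = u_k/‖u_k‖ ⇀ v*` weakly.  Then for any `h ∈ H`,
`(1/‖u_k‖)(∇L(u_k), h) → (v*, B(θ)h)` and `(λ_k/‖u_k‖)(∇G(u_k), h) → λ*(G''(θ)v*, h)`,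
so that `B(θ)v* = λ* G''(θ)v*`; moreover `C₀' ≤ ((λ* G''(θ) - Q(θ))v*, v*)`, hence
`v* ≠ θ`. -/
theorem stmt_13 {H : Type*} [NormedAddCommGroup H] [InnerProductSpace ℝ H] [CompleteSpace H]
    (V : Set H) (hVopen : IsOpen V) (hV0 : (0 : H) ∈ V)
    (L G : H → ℝ) (gL gG : H → H)
    (hLd : ∀ u ∈ V, HasGradientAt L (gL u) u) (hLc : ContinuousOn gL V)
    (hGd : ∀ u ∈ V, HasGradientAt G (gG u) u) (hGc : ContinuousOn gG V)
    (hL0 : gL 0 = 0) (hG0 : gG 0 = 0)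
    (B P Q : H → H →L[ℝ] H)
    (hBsa : ∀ u ∈ V, ∀ v w : H, ⟪B u v, w⟫ = ⟪v, B u w⟫)
    (hBgat : ∀ u ∈ V, ∀ v : H,
      Tendsto (fun t : ℝ => t⁻¹ • (gL (u + t • v) - gL u)) (𝓝[≠] (0:ℝ)) (𝓝 (B u v)))
    (hBPQ : ∀ u ∈ V, B u = P u + Q u)
    (hPpos : ∀ u ∈ V, ∀ v : H, v ≠ 0 → 0 < ⟪P u v, v⟫)
    (hQcpt : ∀ u ∈ V, IsCompactOperator (Q u))
    (hD2 : ∀ v : H, Tendsto (fun u => P u v) (𝓝 0) (𝓝 (P 0 v)))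
    (hD3 : Tendsto Q (𝓝 0) (𝓝 (Q 0)))
    (η₀ C₀' : ℝ) (hη₀ : 0 < η₀) (hC₀' : 0 < C₀') (hball : Metric.ball (0:H) η₀ ⊆ V)
    (hD4 : ∀ u ∈ Metric.ball (0:H) η₀, ∀ v : H, C₀' * ‖v‖ ^ 2 ≤ ⟪P u v, v⟫)
    (G'' : H → H →L[ℝ] H)
    (hG''sa : ∀ u ∈ V, ∀ v w : H, ⟪G'' u v, w⟫ = ⟪v, G'' u w⟫)
    (hG''gat : ∀ u ∈ V, ∀ v : H,
      Tendsto (fun t : ℝ => t⁻¹ • (gG (u + t • v) - gG u)) (𝓝[≠] (0:ℝ)) (𝓝 (G'' u v)))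
    (hG''cpt : ∀ u ∈ V, IsCompactOperator (G'' u))
    (hG''cont : Tendsto G'' (𝓝 0) (𝓝 (G'' 0)))
    (lamstar : ℝ) (lam : ℕ → ℝ) (u : ℕ → H)
    (hlam : Tendsto lam atTop (𝓝 lamstar)) (huto0 : Tendsto u atTop (𝓝 0))
    (hsol : ∀ k, u k ∈ V ∧ u k ≠ 0 ∧ gL (u k) = lam k • gG (u k))
    (vstar : H)
    (hweak : ∀ w : H,
      Tendsto (fun k => ⟪‖u k‖⁻¹ • u k, w⟫) atTop (𝓝 ⟪vstar, w⟫)) :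
    (∀ h : H, Tendsto (fun k => ‖u k‖⁻¹ * ⟪gL (u k), h⟫) atTop (𝓝 ⟪vstar, B 0 h⟫)) ∧
    (∀ h : H, Tendsto (fun k => (lam k / ‖u k‖) * ⟪gG (u k), h⟫) atTop
      (𝓝 (lamstar * ⟪G'' 0 vstar, h⟫))) ∧
    B 0 vstar = lamstar • G'' 0 vstar ∧
    C₀' ≤ ⟪lamstar • G'' 0 vstar - Q 0 vstar, vstar⟫ ∧
    vstar ≠ 0 := by
  classical
  have hune : ∀ k, u k ≠ 0 := fun k => (hsol k).2.1
  set v : ℕ → H := fun k => ‖u k‖⁻¹ • u k with hv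
  have hvnorm : ∀ k, ‖v k‖ = 1 := by
    intro k
    rw [hv]
    simp only [norm_smul, norm_inv, norm_norm]
    exact inv_mul_cancel₀ (norm_ne_zero_iff.mpr (hune k))
  have hsmall : ∀ᶠ k in atTop, ‖u k‖ < η₀ := by
    have := Metric.tendsto_nhds.mp huto0 η₀ hη₀
    simpa [dist_zero_right] using this
  have hnorm0 : Tendsto (fun k => ‖u k‖) atTop (𝓝 0) := by
    simpa using huto0.norm
  -- MVT via Gâteaux differentiability
  have key : ∀ (g : H → H) (T : H → H →L[ℝ] H), ContinuousOn g V →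
      (∀ w ∈ V, ∀ z : H, Tendsto (fun t : ℝ => t⁻¹ • (g (w + t • z) - g w))
        (𝓝[≠] (0:ℝ)) (𝓝 (T w z))) →
      g 0 = 0 → ∀ (h : H) (k : ℕ), ‖u k‖ < η₀ →
      ∃ w : H, ‖w‖ < η₀ ∧ ‖w‖ ≤ ‖u k‖ ∧ ⟪g (u k), h⟫ = ⟪T w (u k), h⟫ := by
    intro g T hgc hgat hg0 h k hk
    have hseg : ∀ t : ℝ, t ∈ Set.Icc (0:ℝ) 1 → t • u k ∈ V := by
      intro t ht
      apply hball
      rw [Metric.mem_ball, dist_zero_right, norm_smul]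
      calc |t| * ‖u k‖ ≤ 1 * ‖u k‖ := by
            apply mul_le_mul_of_nonneg_right _ (norm_nonneg _)
            rw [abs_of_nonneg ht.1]; exact ht.2
        _ < η₀ := by rwa [one_mul]
    obtain ⟨τ, hτ, heq⟩ := mvt_aux V g T hgc hgat hg0 (u k) h hseg
    refine ⟨τ • u k, ?_, ?_, heq⟩
    · rw [norm_smul, Real.norm_eq_abs, abs_of_nonneg hτ.1.le]
      nlinarith [norm_nonneg (u k), hτ.2, hτ.1]
    · rw [norm_smul, Real.norm_eq_abs, abs_of_nonneg hτ.1.le]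
      nlinarith [norm_nonneg (u k), hτ.2.le, hτ.1.le]
  -- choice of intermediate points
  have pick : ∀ (g : H → H) (T : H → H →L[ℝ] H), ContinuousOn g V →
      (∀ w ∈ V, ∀ z : H, Tendsto (fun t : ℝ => t⁻¹ • (g (w + t • z) - g w))
        (𝓝[≠] (0:ℝ)) (𝓝 (T w z))) →
      g 0 = 0 → ∀ (h : ℕ → H),
      ∃ w : ℕ → H, (∀ k, ‖w k‖ < η₀) ∧ (∀ k, ‖w k‖ ≤ ‖u k‖) ∧
        (∀ k, ‖u k‖ < η₀ → ⟪g (u k), h k⟫ = ⟪T (w k) (u k), h k⟫) := by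
    intro g T hgc hgat hg0 h
    have hch : ∀ k, ∃ w : H, ‖w‖ < η₀ ∧ ‖w‖ ≤ ‖u k‖ ∧
        (‖u k‖ < η₀ → ⟪g (u k), h k⟫ = ⟪T w (u k), h k⟫) := by
      intro k
      by_cases hk : ‖u k‖ < η₀
      · obtain ⟨w, h1, h2, h3⟩ := key g T hgc hgat hg0 (h k) k hk
        exact ⟨w, h1, h2, fun _ => h3⟩
      · exact ⟨0, by simpa using hη₀, by simp, fun hk' => absurd hk' hk⟩
    choose w h1 h2 h3 using hch
    exact ⟨w, h1, h2, h3⟩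
  -- pointwise operator continuity at 0 along sequences
  have hBcont : ∀ (w : ℕ → H), (∀ k, w k ∈ Metric.ball (0:H) η₀) → Tendsto w atTop (𝓝 0) →
      ∀ z : H, Tendsto (fun k => B (w k) z) atTop (𝓝 (B 0 z)) := by
    intro w hwball hw0 z
    have hPz : Tendsto (fun k => P (w k) z) atTop (𝓝 (P 0 z)) := (hD2 z).comp hw0
    have hQz : Tendsto (fun k => Q (w k) z) atTop (𝓝 (Q 0 z)) := by
      have hc : Continuous (fun A : H →L[ℝ] H => A z) :=
        (ContinuousLinearMap.apply ℝ H z).continuous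
      exact (hc.tendsto _).comp (hD3.comp hw0)
    have hB0 : B 0 z = P 0 z + Q 0 z := by rw [hBPQ 0 hV0]; rfl
    rw [hB0]
    refine (hPz.add hQz).congr fun k => ?_
    rw [hBPQ (w k) (hball (hwball k))]
    rfl
  have hG''contv : ∀ (w : ℕ → H), (∀ k, w k ∈ Metric.ball (0:H) η₀) → Tendsto w atTop (𝓝 0) →
      ∀ z : H, Tendsto (fun k => G'' (w k) z) atTop (𝓝 (G'' 0 z)) := by
    intro w _ hw0 z
    have hc : Continuous (fun A : H →L[ℝ] H => A z) :=
      (ContinuousLinearMap.apply ℝ H z).continuous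
    exact (hc.tendsto _).comp (hG''cont.comp hw0)
  -- main convergence lemma
  have conv : ∀ (g : H → H) (T : H → H →L[ℝ] H), ContinuousOn g V →
      (∀ w ∈ V, ∀ z : H, Tendsto (fun t : ℝ => t⁻¹ • (g (w + t • z) - g w))
        (𝓝[≠] (0:ℝ)) (𝓝 (T w z))) →
      g 0 = 0 →
      (∀ w ∈ V, ∀ a b : H, ⟪T w a, b⟫ = ⟪a, T w b⟫) →
      (∀ (w : ℕ → H), (∀ k, w k ∈ Metric.ball (0:H) η₀) → Tendsto w atTop (𝓝 0) →
        ∀ z : H, Tendsto (fun k => T (w k) z) atTop (𝓝 (T 0 z))) →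
      ∀ h : H, Tendsto (fun k => ‖u k‖⁻¹ * ⟪g (u k), h⟫) atTop (𝓝 ⟪vstar, T 0 h⟫) := by
    intro g T hgc hgat hg0 hTsa hTcont h
    obtain ⟨w, hw1, hw2, hw3⟩ := pick g T hgc hgat hg0 (fun _ => h)
    have hw0 : Tendsto w atTop (𝓝 0) := squeeze_zero_norm hw2 hnorm0
    have hwball : ∀ k, w k ∈ Metric.ball (0:H) η₀ := fun k => by
      rw [Metric.mem_ball, dist_zero_right]; exact hw1 k
    have hTk := hTcont w hwball hw0 h
    have hdiff : Tendsto (fun k => ⟪v k, T (w k) h - T 0 h⟫) atTop (𝓝 0) := by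
      apply squeeze_zero_norm (a := fun k => ‖T (w k) h - T 0 h‖)
      · intro k
        calc ‖(⟪v k, T (w k) h - T 0 h⟫ : ℝ)‖ ≤ ‖v k‖ * ‖T (w k) h - T 0 h‖ :=
              norm_inner_le_norm _ _
          _ = ‖T (w k) h - T 0 h‖ := by rw [hvnorm k, one_mul]
      · have := (hTk.sub (tendsto_const_nhds (x := T 0 h))).norm
        simpa using this
    have hmain : Tendsto (fun k => ⟪v k, T 0 h⟫ + ⟪v k, T (w k) h - T 0 h⟫) atTop
        (𝓝 (⟪vstar, T 0 h⟫ + 0)) := (hweak (T 0 h)).add hdiff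
    rw [add_zero] at hmain
    apply hmain.congr'
    filter_upwards [hsmall] with k hk
    have hsa := hTsa (w k) (hball (hwball k)) (u k) h
    calc ⟪v k, T 0 h⟫ + ⟪v k, T (w k) h - T 0 h⟫ = ⟪v k, T (w k) h⟫ := by
          rw [inner_sub_right]; ring
      _ = ‖u k‖⁻¹ * ⟪u k, T (w k) h⟫ := real_inner_smul_left _ _ _
      _ = ‖u k‖⁻¹ * ⟪T (w k) (u k), h⟫ := by rw [hsa]
      _ = ‖u k‖⁻¹ * ⟪g (u k), h⟫ := by rw [← hw3 k hk]
  -- Part 1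
  have part1 := conv gL B hLc hBgat hL0 hBsa hBcont
  have part2' := conv gG G'' hGc hG''gat hG0 hG''sa hG''contv
  -- Part 2
  have part2 : ∀ h : H, Tendsto (fun k => (lam k / ‖u k‖) * ⟪gG (u k), h⟫) atTop
      (𝓝 (lamstar * ⟪G'' 0 vstar, h⟫)) := by
    intro h
    have := hlam.mul (part2' h)
    rw [hG''sa 0 hV0 vstar h]
    refine this.congr fun k => ?_
    rw [div_eq_mul_inv]; ring
  -- Part 3
  have part3 : B 0 vstar = lamstar • G'' 0 vstar := by
    apply ext_inner_right ℝ
    intro h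
    have seq2 : Tendsto (fun k => ‖u k‖⁻¹ * ⟪gL (u k), h⟫) atTop
        (𝓝 (lamstar * ⟪G'' 0 vstar, h⟫)) := by
      refine (part2 h).congr fun k => ?_
      rw [(hsol k).2.2, real_inner_smul_left, div_eq_mul_inv]; ring
    have e2 := tendsto_nhds_unique (part1 h) seq2
    rw [hBsa 0 hV0 vstar h, e2, real_inner_smul_left]
  -- Part 4
  have part4 : C₀' ≤ ⟪lamstar • G'' 0 vstar - Q 0 vstar, vstar⟫ := by
    obtain ⟨wB, hwB1, hwB2, hwB3⟩ := pick gL B hLc hBgat hL0 u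
    obtain ⟨wG, hwG1, hwG2, hwG3⟩ := pick gG G'' hGc hG''gat hG0 u
    have hwB0 : Tendsto wB atTop (𝓝 0) := squeeze_zero_norm hwB2 hnorm0
    have hwG0 : Tendsto wG atTop (𝓝 0) := squeeze_zero_norm hwG2 hnorm0
    have hwBball : ∀ k, wB k ∈ Metric.ball (0:H) η₀ := fun k => by
      rw [Metric.mem_ball, dist_zero_right]; exact hwB1 k
    have hscale : ∀ (A : H →L[ℝ] H) (k : ℕ),
        ⟪A (v k), v k⟫ = ‖u k‖⁻¹ * (‖u k‖⁻¹ * ⟪A (u k), u k⟫) := by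
      intro A k
      rw [hv]
      simp only [map_smul, real_inner_smul_left, real_inner_smul_right, smul_eq_mul]
      try ring
    -- quadratic form convergence via compactness
    have quad : ∀ (T0 : H →L[ℝ] H), IsCompactOperator T0 → ∀ (S : ℕ → H →L[ℝ] H),
        Tendsto S atTop (𝓝 T0) →
        Tendsto (fun k => ⟪S k (v k), v k⟫) atTop (𝓝 ⟪T0 vstar, vstar⟫) := by
      intro T0 hT0 S hS
      have hstr : Tendsto (fun k => T0 (v k)) atTop (𝓝 (T0 vstar)) :=
        cpt_aux T0 hT0 v (fun k => (hvnorm k).le) vstar hweak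
      have h1 : Tendsto (fun k => ⟪(S k - T0) (v k), v k⟫) atTop (𝓝 0) := by
        apply squeeze_zero_norm (a := fun k => ‖S k - T0‖)
        · intro k
          calc ‖(⟪(S k - T0) (v k), v k⟫ : ℝ)‖ ≤ ‖(S k - T0) (v k)‖ * ‖v k‖ :=
                norm_inner_le_norm _ _
            _ = ‖(S k - T0) (v k)‖ := by rw [hvnorm k, mul_one]
            _ ≤ ‖S k - T0‖ * ‖v k‖ := (S k - T0).le_opNorm _
            _ = ‖S k - T0‖ := by rw [hvnorm k, mul_one]
        · have := (hS.sub (tendsto_const_nhds (x := T0))).norm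
          simpa using this
      have h2 : Tendsto (fun k => ⟪T0 (v k) - T0 vstar, v k⟫) atTop (𝓝 0) := by
        apply squeeze_zero_norm (a := fun k => ‖T0 (v k) - T0 vstar‖)
        · intro k
          calc ‖(⟪T0 (v k) - T0 vstar, v k⟫ : ℝ)‖ ≤ ‖T0 (v k) - T0 vstar‖ * ‖v k‖ :=
                norm_inner_le_norm _ _
            _ = ‖T0 (v k) - T0 vstar‖ := by rw [hvnorm k, mul_one]
        · have := (hstr.sub (tendsto_const_nhds (x := T0 vstar))).norm
          simpa using this
      have h3 : Tendsto (fun k => ⟪v k, T0 vstar⟫) atTop (𝓝 ⟪vstar, T0 vstar⟫) := hweak _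
      have heq : ∀ k, (⟪S k (v k), v k⟫ : ℝ) =
          ⟪(S k - T0) (v k), v k⟫ + ⟪T0 (v k) - T0 vstar, v k⟫ + ⟪v k, T0 vstar⟫ := by
        intro k
        rw [ContinuousLinearMap.sub_apply, inner_sub_left, inner_sub_left,
          real_inner_comm (v k) (T0 vstar)]
        try ring
      rw [show (⟪T0 vstar, vstar⟫ : ℝ) = 0 + 0 + ⟪vstar, T0 vstar⟫ by
        rw [real_inner_comm]; ring]
      exact (((h1.add h2).add h3)).congr fun k => (heq k).symm
    have limG : Tendsto (fun k => lam k * ⟪G'' (wG k) (v k), v k⟫) atTop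
        (𝓝 (lamstar * ⟪G'' 0 vstar, vstar⟫)) :=
      hlam.mul (quad (G'' 0) (hG''cpt 0 hV0) (fun k => G'' (wG k)) (hG''cont.comp hwG0))
    have limQ : Tendsto (fun k => ⟪Q (wB k) (v k), v k⟫) atTop (𝓝 ⟪Q 0 vstar, vstar⟫) :=
      quad (Q 0) (hQcpt 0 hV0) (fun k => Q (wB k)) (hD3.comp hwB0)
    have hlim := limG.sub limQ
    have hineq : ∀ᶠ k in atTop,
        C₀' ≤ lam k * ⟪G'' (wG k) (v k), v k⟫ - ⟪Q (wB k) (v k), v k⟫ := by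
      filter_upwards [hsmall] with k hk
      have hBu : ⟪B (wB k) (u k), u k⟫ = lam k * ⟪G'' (wG k) (u k), u k⟫ := by
        rw [← hwB3 k hk, (hsol k).2.2, real_inner_smul_left, hwG3 k hk]
      have hBv : ⟪B (wB k) (v k), v k⟫ = lam k * ⟪G'' (wG k) (v k), v k⟫ := by
        rw [hscale, hscale, hBu]; ring
      have hsplit : ⟪B (wB k) (v k), v k⟫ = ⟪P (wB k) (v k), v k⟫ + ⟪Q (wB k) (v k), v k⟫ := by
        rw [hBPQ (wB k) (hball (hwBball k)), ContinuousLinearMap.add_apply, inner_add_left]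
      have hP := hD4 (wB k) (hwBball k) (v k)
      rw [hvnorm k] at hP
      norm_num at hP
      linarith [hBv ▸ hsplit]
    calc C₀' ≤ lamstar * ⟪G'' 0 vstar, vstar⟫ - ⟪Q 0 vstar, vstar⟫ :=
          ge_of_tendsto hlim hineq
      _ = ⟪lamstar • G'' 0 vstar - Q 0 vstar, vstar⟫ := by
          rw [inner_sub_left, real_inner_smul_left]
  refine ⟨part1, part2, part3, part4, ?_⟩
  intro hv0
  rw [hv0] at part4
  simp only [inner_zero_right] at part4
  linarith
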